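/- Suppose an AON has N_A nodes with access probability τ_A and a TON has N_T nodes with access probability τ_T, with σ_S = σ_C. Then the AON's expected age payoff u_A(τ_A) (to be minimized) is minimized over τ_A ∈ [0,1] at τ_A* = (N_A(σ_I − σ_S) + δ̄)/(N_A(σ_I − σ_C + δ̄)) if δ̄ > N_A(σ_S − σ_I), and at τ_A* = 0 otherwise, where δ̄ is the average age at the start of the slot. -/

import Mathlib

def uA (NA NT : ℕ) (σI σS σC δ τA τT : ℝ) : ℝ :=
  (1 - τA * (1 - τA) ^ (NA - 1) * (1 - τT) ^ NT) * δ
    + (1 - τA) ^ NA * (1 - τT) ^ NT * (σI - σC) + σC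
    + ((NA : ℝ) * τA * (1 - τA) ^ (NA - 1) * (1 - τT) ^ NT
        + (NT : ℝ) * τT * (1 - τT) ^ (NT - 1) * (1 - τA) ^ NA) * (σS - σC)

lemma stmt4_deriv_aux (m : ℕ) (b d x : ℝ) :
    HasDerivAt (fun x : ℝ => d * x ^ m - b * x ^ (m+1))
      (d * ((m:ℝ) * x ^ (m-1)) - b * (((m:ℝ)+1) * x ^ m)) x := by
  have h1 := (hasDerivAt_pow m x).const_mul d
  have h2 := (hasDerivAt_pow (m+1) x).const_mul b
  simpa [Pi.sub_def] using h1.sub h2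

lemma stmt4_key (m : ℕ) (b d : ℝ) (hb : 0 < b) (hd : 0 < d) (x : ℝ)
    (hx : x ∈ Set.Icc (0:ℝ) 1) :
    d * x ^ m - b * x ^ (m+1) ≤
      d * (min ((m:ℝ)*d/(((m:ℝ)+1)*b)) 1) ^ m
        - b * (min ((m:ℝ)*d/(((m:ℝ)+1)*b)) 1) ^ (m+1) := by
  set t : ℝ := (m:ℝ)*d/(((m:ℝ)+1)*b) with ht
  set s : ℝ := min t 1 with hs
  have hden : 0 < ((m:ℝ)+1)*b := by positivity
  have ht0 : 0 ≤ t := by positivity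
  have hs0 : 0 ≤ s := le_min ht0 zero_le_one
  have hs1 : s ≤ 1 := min_le_right _ _
  set f : ℝ → ℝ := fun x => d * x ^ m - b * x ^ (m+1) with hf
  have hderiv : ∀ y : ℝ, deriv f y = d * ((m:ℝ) * y ^ (m-1)) - b * (((m:ℝ)+1) * y ^ m) :=
    fun y => (stmt4_deriv_aux m b d y).deriv
  have hdiff : Differentiable ℝ f := fun y => (stmt4_deriv_aux m b d y).differentiableAt
  have hmono : MonotoneOn f (Set.Icc 0 s) := by
    apply monotoneOn_of_deriv_nonneg (convex_Icc _ _) hdiff.continuous.continuousOn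
      hdiff.differentiableOn
    intro y hy
    rw [interior_Icc] at hy
    rw [hderiv]
    rcases Nat.eq_zero_or_pos m with hm | hm
    · exfalso
      have hts : s ≤ t := min_le_left _ _
      have : t = 0 := by rw [ht, hm]; simp
      linarith [hy.1, hy.2]
    · have hy0 : 0 < y := hy.1
      have hyt : y < t := lt_of_lt_of_le hy.2 (min_le_left _ _)
      have hym : y ^ m = y ^ (m-1) * y := by
        conv_lhs => rw [show m = (m-1)+1 by omega]
        ring
      have hkey : (((m:ℝ)+1)*b) * y ≤ (m:ℝ) * d := by
        have := (lt_div_iff₀ hden).mp hyt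
        linarith
      have hpow : (0:ℝ) ≤ y ^ (m-1) := by positivity
      calc (0:ℝ) ≤ y ^ (m-1) * ((m:ℝ) * d - ((m:ℝ)+1)*b*y) := by
              apply mul_nonneg hpow; linarith
        _ = d * ((m:ℝ) * y ^ (m-1)) - b * (((m:ℝ)+1) * y ^ m) := by rw [hym]; ring
  have hanti : AntitoneOn f (Set.Icc s 1) := by
    apply antitoneOn_of_deriv_nonpos (convex_Icc _ _) hdiff.continuous.continuousOn
      hdiff.differentiableOn
    intro y hy
    rw [interior_Icc] at hy
    rw [hderiv]
    have hy0 : 0 < y := lt_of_le_of_lt hs0 hy.1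
    have hst : s = t := by
      rw [hs, min_eq_left]
      by_contra h
      push_neg at h
      have : s = 1 := by rw [hs, min_eq_right (le_of_lt h)]
      linarith [hy.1, hy.2]
    have hyt : t < y := hst ▸ hy.1
    rcases Nat.eq_zero_or_pos m with hm | hm
    · subst hm
      simp only [Nat.cast_zero, zero_mul, mul_zero, zero_sub, neg_nonpos, pow_zero]
      positivity
    · have hym : y ^ m = y ^ (m-1) * y := by
        conv_lhs => rw [show m = (m-1)+1 by omega]
        ring
      have hkey : (m:ℝ) * d ≤ (((m:ℝ)+1)*b) * y := by
        have := (div_lt_iff₀ hden).mp hyt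
        linarith
      have hpow : (0:ℝ) ≤ y ^ (m-1) := by positivity
      calc d * ((m:ℝ) * y ^ (m-1)) - b * (((m:ℝ)+1) * y ^ m)
          = y ^ (m-1) * ((m:ℝ) * d - ((m:ℝ)+1)*b*y) := by rw [hym]; ring
        _ ≤ 0 := by
            apply mul_nonpos_of_nonneg_of_nonpos hpow; linarith
  rcases le_total x s with h | h
  · exact hmono ⟨hx.1, h⟩ ⟨hs0, le_refl s⟩ h
  · exact hanti ⟨le_refl s, hs1⟩ ⟨h, hx.2⟩ h

lemma stmt4_uA_eq (m NT : ℕ) (σI σC δ τ τT : ℝ) :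
    uA (m+1) NT σI σC σC δ τ τT
      = δ + σC - (1-τT)^NT * (δ*(1-τ)^m - (σI - σC + δ)*(1-τ)^(m+1)) := by
  simp only [uA, Nat.add_sub_cancel, sub_self, mul_zero, add_zero]
  ring

theorem stmt4 (NA NT : ℕ) (hNA : 1 ≤ NA) (hNT : 1 ≤ NT)
    (σI σS σC δ τT : ℝ) (hσI : 0 < σI) (hI : σI < σS) (hSC : σS = σC)
    (hδ : σS ≤ δ) (hτT : τT ∈ Set.Ico (0 : ℝ) 1)
    (τAs : ℝ)
    (hτAs : τAs = if (NA : ℝ) * (σS - σI) < δ then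
        ((NA : ℝ) * (σI - σS) + δ) / ((NA : ℝ) * (σI - σC + δ)) else 0) :
    ∀ τA ∈ Set.Icc (0 : ℝ) 1,
      uA NA NT σI σS σC δ τAs τT ≤ uA NA NT σI σS σC δ τA τT := by
  subst hSC
  obtain ⟨m, rfl⟩ : ∃ m, NA = m + 1 := ⟨NA - 1, by omega⟩
  intro τA hτA
  set b : ℝ := σI - σS + δ with hb
  have hb0 : 0 < b := by linarith
  have hd0 : 0 < δ := by linarith
  have hden : 0 < ((m:ℝ)+1)*b := by positivity
  set t : ℝ := (m:ℝ)*δ/(((m:ℝ)+1)*b) with htdef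
  -- τAs = 1 - min t 1
  have hτAs' : τAs = 1 - min t 1 := by
    rw [hτAs]
    push_cast
    split_ifs with h
    · have ht1 : t ≤ 1 := by
        rw [htdef, div_le_one hden]
        push_cast at h ⊢
        nlinarith
      rw [min_eq_left ht1, htdef]
      field_simp
      ring
    · push_neg at h
      have h1t : 1 ≤ t := by
        rw [htdef, le_div_iff₀ hden]
        push_cast at h ⊢
        nlinarith
      rw [min_eq_right h1t]
      ring
  have hc : (0:ℝ) ≤ (1-τT)^NT := by
    have : 0 ≤ 1 - τT := by linarith [hτT.2]
    positivity
  rw [stmt4_uA_eq, stmt4_uA_eq]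
  have h1 : 1 - τAs = min t 1 := by rw [hτAs']; ring
  have h2 : (σI - σS + δ) = b := rfl
  rw [h1, h2]
  have hkey := stmt4_key m b δ hb0 hd0 (1 - τA)
    ⟨by linarith [hτA.2], by linarith [hτA.1]⟩
  rw [← htdef] at hkey
  nlinarith [mul_le_mul_of_nonneg_left hkey hc]
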